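/- Suppose a, b : ℝ → ℝ satisfy the Lipschitz condition (A1) and condition (A4) with exponent p ≥ 0, and set d(x) = a(x)²/b(x)². Then there exists a constant C > 0 such that for all x, y ∈ ℝ, |d(x) - d(y)| ≤ C|x - y| · (1 + |x|^{2p+1} + (1 + |x|^p)(1 + |y|^{p+1}) + (1 + |x|^{2p+1})(1 + |y|^{p+1}) + (1 + |x|^{p+1})(1 + |y|^{2p+1})). -/

import Mathlib

lemma key_rpow (t q r : ℝ) (ht : 0 ≤ t) (hq : 0 ≤ q) (hr : 0 ≤ r) :
    (1 + t ^ q) * (1 + t ^ r) ≤ 4 * (1 + t ^ (q + r)) := by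
  rcases le_total t 1 with h | h
  · have h1 : t ^ q ≤ 1 := Real.rpow_le_one ht h hq
    have h2 : t ^ r ≤ 1 := Real.rpow_le_one ht h hr
    have h3 : 0 ≤ t ^ (q + r) := Real.rpow_nonneg ht _
    have h4 : 0 ≤ t ^ q := Real.rpow_nonneg ht _
    have h5 : 0 ≤ t ^ r := Real.rpow_nonneg ht _
    nlinarith
  · have ht0 : (0 : ℝ) < t := lt_of_lt_of_le one_pos h
    have h1 : t ^ q ≤ t ^ (q + r) := Real.rpow_le_rpow_of_exponent_le h (by linarith)
    have h2 : t ^ r ≤ t ^ (q + r) := Real.rpow_le_rpow_of_exponent_le h (by linarith)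
    have h3 : t ^ q * t ^ r = t ^ (q + r) := (Real.rpow_add ht0 q r).symm
    have h4 : 0 ≤ t ^ (q + r) := Real.rpow_nonneg ht _
    nlinarith

lemma aux_fval (a b : ℝ → ℝ) (L K p : ℝ) (hL : 0 < L) (hK : 0 < K) (hp : 0 ≤ p)
    (hlip : ∀ x y : ℝ, |a x - a y| + |b x - b y| ≤ L * |x - y|)
    (hb : ∀ x : ℝ, |b x|⁻¹ ≤ K * (1 + |x| ^ p)) (x : ℝ) :
    |a x / b x| ≤ 4 * (|a 0| + L) * K * (1 + |x| ^ (p + 1)) := by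
  have h1 : |a x| ≤ |a 0| + L * |x| := by
    have h := hlip x 0
    have h2 : |a x| - |a 0| ≤ |a x - a 0| := abs_sub_abs_le_abs_sub _ _
    have h3 : 0 ≤ |b x - b 0| := abs_nonneg _
    simp only [sub_zero] at h
    linarith
  have h2 := hb x
  have hPx : 0 ≤ 1 + |x| ^ p := by positivity
  calc |a x / b x| = |a x| * |b x|⁻¹ := by rw [abs_div, div_eq_mul_inv]
    _ ≤ (|a 0| + L * |x|) * (K * (1 + |x| ^ p)) := by
        apply mul_le_mul h1 h2 (inv_nonneg.mpr (abs_nonneg _))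
        have := abs_nonneg (a 0); have := abs_nonneg x; nlinarith
    _ ≤ ((|a 0| + L) * (1 + |x|)) * (K * (1 + |x| ^ p)) := by
        apply mul_le_mul_of_nonneg_right _ (by positivity)
        nlinarith [abs_nonneg (a 0), abs_nonneg x, hL]
    _ = ((|a 0| + L) * K) * ((1 + |x| ^ (1:ℝ)) * (1 + |x| ^ p)) := by
        rw [Real.rpow_one]; ring
    _ ≤ ((|a 0| + L) * K) * (4 * (1 + |x| ^ ((1:ℝ) + p))) := by
        apply mul_le_mul_of_nonneg_left
          (key_rpow |x| 1 p (abs_nonneg x) zero_le_one hp)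
        have := abs_nonneg (a 0); positivity
    _ = 4 * (|a 0| + L) * K * (1 + |x| ^ (p + 1)) := by
        rw [add_comm (1:ℝ) p]; ring


lemma aux_dich (b : ℝ → ℝ) (L K p : ℝ) (hL : 0 < L) (hK : 0 < K) (hp : 0 ≤ p)
    (hlipb : ∀ x y : ℝ, |b x - b y| ≤ L * |x - y|)
    (hb : ∀ x : ℝ, |b x|⁻¹ ≤ K * (1 + |x| ^ p)) :
    (∀ x, b x = 0) ∨ (∀ x, b x ≠ 0) := by
  have hcont : Continuous b := by
    apply LipschitzWith.continuous (K := L.toNNReal)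
    apply LipschitzWith.of_dist_le_mul
    intro x y
    rw [Real.dist_eq, Real.dist_eq, Real.coe_toNNReal L hL.le]
    exact hlipb x y
  have hclopen : IsClopen {x : ℝ | b x = 0} := by
    constructor
    · exact isClosed_eq hcont continuous_const
    · rw [Metric.isOpen_iff]
      intro z hz
      simp only [Set.mem_setOf_eq] at hz
      set ε : ℝ := (K * (1 + (|z| + 1) ^ p))⁻¹ with hε
      have hεpos : 0 < ε := by positivity
      refine ⟨min 1 (ε / (2 * L)), by positivity, ?_⟩
      intro x hx
      rw [Metric.mem_ball, Real.dist_eq] at hx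
      simp only [Set.mem_setOf_eq]
      by_contra hbx
      have hxz1 : |x - z| < 1 := lt_of_lt_of_le hx (min_le_left _ _)
      have hxz2 : |x - z| < ε / (2 * L) := lt_of_lt_of_le hx (min_le_right _ _)
      have hsmall : |b x| < ε / 2 := by
        have h1 : |b x - b z| ≤ L * |x - z| := hlipb x z
        have h2 : L * |x - z| < L * (ε / (2 * L)) :=
          mul_lt_mul_of_pos_left hxz2 hL
        have h3 : L * (ε / (2 * L)) = ε / 2 := by field_simp
        rw [hz, sub_zero] at h1
        linarith
      have hbig : ε ≤ |b x| := by
        have h1 : |b x|⁻¹ ≤ K * (1 + |x| ^ p) := hb x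
        have h2 : |x| ^ p ≤ (|z| + 1) ^ p := by
          apply Real.rpow_le_rpow (abs_nonneg x) _ hp
          have : |x| - |z| ≤ |x - z| := by
            have := abs_sub_abs_le_abs_sub x z; linarith
          linarith
        have h3 : |b x|⁻¹ ≤ ε⁻¹ := by
          rw [hε, inv_inv]
          have : K * (1 + |x| ^ p) ≤ K * (1 + (|z| + 1) ^ p) := by nlinarith
          linarith
        have hbpos : 0 < |b x| := abs_pos.mpr hbx
        rwa [inv_le_inv₀ hbpos hεpos] at h3
      linarith
  rcases isClopen_iff.mp hclopen with h | h
  · right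
    intro x hx
    have : x ∈ ({x : ℝ | b x = 0}) := hx
    rw [h] at this
    exact this
  · left
    intro x
    have : x ∈ ({x : ℝ | b x = 0}) := by rw [h]; trivial
    exact this


lemma aux_fdiff (a b : ℝ → ℝ) (L K p : ℝ) (hL : 0 < L) (hK : 0 < K) (hp : 0 ≤ p)
    (hlip : ∀ x y : ℝ, |a x - a y| + |b x - b y| ≤ L * |x - y|)
    (hb : ∀ x : ℝ, |b x|⁻¹ ≤ K * (1 + |x| ^ p))
    (hbne : ∀ x : ℝ, b x ≠ 0) (x y : ℝ) :
    |a x / b x - a y / b y| ≤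
      L * K * |x - y| * (1 + |x| ^ p) *
        (1 + (4 * (|a 0| + L) * K) * (1 + |y| ^ (p + 1))) := by
  set C1 : ℝ := 4 * (|a 0| + L) * K with hC1
  have hid : a x / b x - a y / b y
      = (a x - a y) / b x + (a y / b y) * ((b y - b x) / b x) := by
    field_simp [hbne x, hbne y]
    ring
  have e1 : |a x - a y| ≤ L * |x - y| := by
    have h := hlip x y; have := abs_nonneg (b x - b y); linarith
  have e2 : |b y - b x| ≤ L * |x - y| := by
    have h := hlip x y; have := abs_nonneg (a x - a y)
    rw [abs_sub_comm]; linarith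
  have e3 : |b x|⁻¹ ≤ K * (1 + |x| ^ p) := hb x
  have e4 : |a y / b y| ≤ C1 * (1 + |y| ^ (p + 1)) :=
    aux_fval a b L K p hL hK hp hlip hb y
  have hinv0 : 0 ≤ |b x|⁻¹ := inv_nonneg.mpr (abs_nonneg _)
  have hC10 : 0 ≤ C1 := by
    have := abs_nonneg (a 0); rw [hC1]; positivity
  have hQy0 : (0:ℝ) ≤ 1 + |y| ^ (p + 1) := by positivity
  calc |a x / b x - a y / b y|
      = |(a x - a y) / b x + (a y / b y) * ((b y - b x) / b x)| := by rw [hid]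
    _ ≤ |(a x - a y) / b x| + |(a y / b y) * ((b y - b x) / b x)| := abs_add_le _ _
    _ = |a x - a y| * |b x|⁻¹ + |a y / b y| * (|b y - b x| * |b x|⁻¹) := by
        simp only [abs_mul, abs_div, div_eq_mul_inv, abs_inv]
    _ ≤ (L * |x - y|) * (K * (1 + |x| ^ p))
        + (C1 * (1 + |y| ^ (p + 1))) * ((L * |x - y|) * (K * (1 + |x| ^ p))) := by
        have hw : 0 ≤ L * |x - y| := by positivity
        refine add_le_add (mul_le_mul e1 e3 hinv0 hw) ?_
        refine mul_le_mul e4 ?_ (mul_nonneg (abs_nonneg _) hinv0)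
          (mul_nonneg hC10 hQy0)
        exact mul_le_mul e2 e3 hinv0 hw
    _ = L * K * |x - y| * (1 + |x| ^ p) * (1 + C1 * (1 + |y| ^ (p + 1))) := by ring


set_option maxHeartbeats 1000000 in
/-- Under the Lipschitz condition (A1) and condition (A4) with exponent `p ≥ 0`,
the function `d(x) = a(x)²/b(x)²` satisfies the locally-Lipschitz-type estimate
used in the proof of Lemma 4 of the paper. -/
theorem d_lipschitz_type_bound (a b : ℝ → ℝ) (L : ℝ) (hL : 0 < L)
    (hlip : ∀ x y : ℝ, |a x - a y| + |b x - b y| ≤ L * |x - y|)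
    (K p : ℝ) (hK : 0 < K) (hp : 0 ≤ p)
    (hb : ∀ x : ℝ, |b x|⁻¹ ≤ K * (1 + |x| ^ p)) :
    ∃ C > 0, ∀ x y : ℝ,
      |(a x) ^ 2 / (b x) ^ 2 - (a y) ^ 2 / (b y) ^ 2| ≤
        C * |x - y| * (1 + |x| ^ (2 * p + 1)
          + (1 + |x| ^ p) * (1 + |y| ^ (p + 1))
          + (1 + |x| ^ (2 * p + 1)) * (1 + |y| ^ (p + 1))
          + (1 + |x| ^ (p + 1)) * (1 + |y| ^ (2 * p + 1))) := by
  have ha0 : (0:ℝ) ≤ |a 0| := abs_nonneg _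
  set C1 : ℝ := 4 * (|a 0| + L) * K with hC1
  have hC1pos : 0 < C1 := by rw [hC1]; positivity
  set C : ℝ := 8 * L * K * C1 * (1 + C1) with hC
  have hCpos : 0 < C := by rw [hC]; positivity
  refine ⟨C, hCpos, ?_⟩
  intro x y
  have hpoly0 : (0:ℝ) ≤ 1 + |x| ^ (2 * p + 1)
      + (1 + |x| ^ p) * (1 + |y| ^ (p + 1))
      + (1 + |x| ^ (2 * p + 1)) * (1 + |y| ^ (p + 1))
      + (1 + |x| ^ (p + 1)) * (1 + |y| ^ (2 * p + 1)) := by positivity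
  have hlipb : ∀ u v : ℝ, |b u - b v| ≤ L * |u - v| := by
    intro u v
    have h := hlip u v; have := abs_nonneg (a u - a v); linarith
  rcases aux_dich b L K p hL hK hp hlipb hb with hz | hnz
  · rw [hz x, hz y]
    simp only [ne_eq, OfNat.ofNat_ne_zero, not_false_eq_true, zero_pow, div_zero,
      sub_zero, abs_zero]
    exact mul_nonneg (mul_nonneg hCpos.le (abs_nonneg _)) hpoly0
  · -- main case
    have hfx : |a x / b x| ≤ C1 * (1 + |x| ^ (p + 1)) :=
      aux_fval a b L K p hL hK hp hlip hb x
    have hfy : |a y / b y| ≤ C1 * (1 + |y| ^ (p + 1)) :=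
      aux_fval a b L K p hL hK hp hlip hb y
    have hd1 : |a x / b x - a y / b y| ≤
        L * K * |x - y| * (1 + |x| ^ p) * (1 + C1 * (1 + |y| ^ (p + 1))) :=
      aux_fdiff a b L K p hL hK hp hlip hb hnz x y
    have hd2 : |a y / b y - a x / b x| ≤
        L * K * |x - y| * (1 + |y| ^ p) * (1 + C1 * (1 + |x| ^ (p + 1))) := by
      have h := aux_fdiff a b L K p hL hK hp hlip hb hnz y x
      rwa [abs_sub_comm y x] at h
    -- abbreviations
    set Px : ℝ := 1 + |x| ^ p with hPx
    set Py : ℝ := 1 + |y| ^ p with hPy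
    set Qx : ℝ := 1 + |x| ^ (p + 1) with hQx
    set Qy : ℝ := 1 + |y| ^ (p + 1) with hQy
    set Rx : ℝ := 1 + |x| ^ (2 * p + 1) with hRx
    set Ry : ℝ := 1 + |y| ^ (2 * p + 1) with hRy
    have hPx0 : 0 ≤ Px := by rw [hPx]; positivity
    have hPy0 : 0 ≤ Py := by rw [hPy]; positivity
    have hQx0 : 0 ≤ Qx := by rw [hQx]; positivity
    have hQy0 : 0 ≤ Qy := by rw [hQy]; positivity
    have hRx0 : 0 ≤ Rx := by rw [hRx]; positivity
    have hRy0 : 0 ≤ Ry := by rw [hRy]; positivity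
    have hQx1 : 1 ≤ Qx := by
      rw [hQx]; nlinarith [Real.rpow_nonneg (abs_nonneg x) (p + 1)]
    have k1 : Px * Qx ≤ 4 * Rx := by
      have h := key_rpow |x| p (p + 1) (abs_nonneg x) hp (by linarith)
      rw [show p + (p + 1) = 2 * p + 1 by ring] at h
      exact h
    have k2 : Py * Qy ≤ 4 * Ry := by
      have h := key_rpow |y| p (p + 1) (abs_nonneg y) hp (by linarith)
      rw [show p + (p + 1) = 2 * p + 1 by ring] at h
      exact h
    have hw0 : 0 ≤ |x - y| := abs_nonneg _
    -- decomposition of the difference of squares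
    have hsq : |(a x) ^ 2 / (b x) ^ 2 - (a y) ^ 2 / (b y) ^ 2| ≤
        |a x / b x - a y / b y| * |a x / b x|
          + |a y / b y - a x / b x| * |a y / b y| := by
      have h1 : (a x) ^ 2 / (b x) ^ 2 = (a x / b x) ^ 2 := (div_pow _ _ 2).symm
      have h2 : (a y) ^ 2 / (b y) ^ 2 = (a y / b y) ^ 2 := (div_pow _ _ 2).symm
      rw [h1, h2]
      calc |(a x / b x) ^ 2 - (a y / b y) ^ 2|
          = |(a x / b x - a y / b y) * (a x / b x)
              + (a x / b x - a y / b y) * (a y / b y)| := by ring_nf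
        _ ≤ |(a x / b x - a y / b y) * (a x / b x)|
              + |(a x / b x - a y / b y) * (a y / b y)| := abs_add_le _ _
        _ = |a x / b x - a y / b y| * |a x / b x|
              + |a y / b y - a x / b x| * |a y / b y| := by
            rw [abs_mul, abs_mul, abs_sub_comm (a x / b x)]
    have hmain : |a x / b x - a y / b y| * |a x / b x|
          + |a y / b y - a x / b x| * |a y / b y|
        ≤ (L * K * |x - y| * Px * (1 + C1 * Qy)) * (C1 * Qx)
          + (L * K * |x - y| * Py * (1 + C1 * Qx)) * (C1 * Qy) := by
      refine add_le_add (mul_le_mul hd1 hfx (abs_nonneg _) (by positivity))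
        (mul_le_mul hd2 hfy (abs_nonneg _) (by positivity))
    have hcore : Px * Qx * (1 + C1 * Qy) + Py * Qy * (1 + C1 * Qx)
        ≤ 8 * (1 + C1) * (Rx + Px * Qy + Rx * Qy + Qx * Ry) := by
      have f1 : Px * Qx * Qy ≤ 4 * Rx * Qy := mul_le_mul_of_nonneg_right k1 hQy0
      have f2 : Py * Qy * Qx ≤ 4 * Ry * Qx := mul_le_mul_of_nonneg_right k2 hQx0
      have f3 : Py * Qy ≤ 4 * (Qx * Ry) := by
        have h1 : Ry ≤ Qx * Ry := le_mul_of_one_le_left hRy0 hQx1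
        linarith
      have g1 : C1 * (Px * Qx * Qy) ≤ C1 * (4 * Rx * Qy) :=
        mul_le_mul_of_nonneg_left f1 hC1pos.le
      have g2 : C1 * (Py * Qy * Qx) ≤ C1 * (4 * Ry * Qx) :=
        mul_le_mul_of_nonneg_left f2 hC1pos.le
      have n1 : 0 ≤ C1 * Rx := mul_nonneg hC1pos.le hRx0
      have n2 : 0 ≤ C1 * (Px * Qy) := mul_nonneg hC1pos.le (mul_nonneg hPx0 hQy0)
      have n3 : 0 ≤ Px * Qy := mul_nonneg hPx0 hQy0
      have n4 : 0 ≤ Rx * Qy := mul_nonneg hRx0 hQy0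
      have n5 : 0 ≤ C1 * (Rx * Qy) := mul_nonneg hC1pos.le (mul_nonneg hRx0 hQy0)
      have n6 : 0 ≤ Qx * Ry := mul_nonneg hQx0 hRy0
      have n7 : 0 ≤ C1 * (Qx * Ry) := mul_nonneg hC1pos.le (mul_nonneg hQx0 hRy0)
      linarith [k1, g1, f3, g2, n1, n2, n3, n4, n5, n6, n7, hRx0]
    have hfinal : (L * K * |x - y| * Px * (1 + C1 * Qy)) * (C1 * Qx)
          + (L * K * |x - y| * Py * (1 + C1 * Qx)) * (C1 * Qy)
        ≤ C * |x - y| * (1 + |x| ^ (2 * p + 1) + Px * Qy + Rx * Qy + Qx * Ry) := by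
      have hLKw : 0 ≤ L * K * C1 * |x - y| := by positivity
      have h := mul_le_mul_of_nonneg_left hcore hLKw
      calc (L * K * |x - y| * Px * (1 + C1 * Qy)) * (C1 * Qx)
            + (L * K * |x - y| * Py * (1 + C1 * Qx)) * (C1 * Qy)
          = (L * K * C1 * |x - y|) *
              (Px * Qx * (1 + C1 * Qy) + Py * Qy * (1 + C1 * Qx)) := by ring
        _ ≤ (L * K * C1 * |x - y|) *
              (8 * (1 + C1) * (Rx + Px * Qy + Rx * Qy + Qx * Ry)) := h
        _ = C * |x - y| * (Rx + Px * Qy + Rx * Qy + Qx * Ry) := by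
            rw [hC]; ring
        _ = C * |x - y| * (1 + |x| ^ (2 * p + 1) + Px * Qy + Rx * Qy + Qx * Ry) := by
            rw [hRx]
    calc |(a x) ^ 2 / (b x) ^ 2 - (a y) ^ 2 / (b y) ^ 2|
        ≤ |a x / b x - a y / b y| * |a x / b x|
            + |a y / b y - a x / b x| * |a y / b y| := hsq
      _ ≤ (L * K * |x - y| * Px * (1 + C1 * Qy)) * (C1 * Qx)
            + (L * K * |x - y| * Py * (1 + C1 * Qx)) * (C1 * Qy) := hmain
      _ ≤ C * |x - y| * (1 + |x| ^ (2 * p + 1) + Px * Qy + Rx * Qy + Qx * Ry) :=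
          hfinal
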